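/- Let ρ₁₁, ρ₁₂ ≥ 0 be real numbers, H₁₁ an N₁×M₁ complex matrix, H₁₂ an N₂×M₁ complex matrix, and Q an M₁×M₂ complex matrix with Q Q† ⪯ I_{M₁}. Then det(I_{N₂} + ρ₁₂ H₁₂ H₁₂† − ρ₁₂ H₁₂ Q Q† H₁₂†) · det(I_{N₁} + ρ₁₁ H₁₁ H₁₁† − [√(ρ₁₁ρ₁₂) H₁₁ H₁₂†, √ρ₁₁ H₁₁ Q] · [[I_{N₂} + ρ₁₂ H₁₂ H₁₂†, √ρ₁₂ H₁₂ Q], [√ρ₁₂ Q† H₁₂†, I_{M₂}]]^{-1} · [√(ρ₁₁ρ₁₂) H₁₂ H₁₁†; √ρ₁₁ Q† H₁₁†]) ≤ det(I_{N₂} + ρ₁₂ H₁₂ H₁₂†) · det(I_{N₁} + ρ₁₁ H₁₁ H₁₁† − ρ₁₁ ρ₁₂ H₁₁ H₁₂† (I_{N₂} + ρ₁₂ H₁₂ H₁₂†)^{-1} H₁₂ H₁₁†), where all four matrices whose determinants appear are Hermitian positive semidefinite so their determinants are nonnegative reals; the inner 2×2 block matrix and I_{N₂} + ρ₁₂ H₁₂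 H₁₂† are positive definite, hence invertible. -/

import Mathlib

open scoped ComplexOrder Matrix

/-- `I_{N₂} + ρ₁₂ H₁₂H₁₂ᴴ − ρ₁₂ H₁₂ Q Qᴴ H₁₂ᴴ`. -/
noncomputable def detMat₁ {N₂ M₁ M₂ : ℕ} (ρ₁₂ : ℝ) (H12 : Matrix (Fin N₂) (Fin M₁) ℂ)
    (Q : Matrix (Fin M₁) (Fin M₂) ℂ) : Matrix (Fin N₂) (Fin N₂) ℂ :=
  (1 : Matrix (Fin N₂) (Fin N₂) ℂ) + (ρ₁₂ : ℂ) • (H12 * H12ᴴ) -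
    (ρ₁₂ : ℂ) • (H12 * Q * Qᴴ * H12ᴴ)

/-- The inner 2×2 block matrix `[[I + ρ₁₂H₁₂H₁₂ᴴ, √ρ₁₂H₁₂Q], [√ρ₁₂QᴴH₁₂ᴴ, I]]`. -/
noncomputable def innerBlock {N₂ M₁ M₂ : ℕ} (ρ₁₂ : ℝ) (H12 : Matrix (Fin N₂) (Fin M₁) ℂ)
    (Q : Matrix (Fin M₁) (Fin M₂) ℂ) :
    Matrix (Fin N₂ ⊕ Fin M₂) (Fin N₂ ⊕ Fin M₂) ℂ :=
  Matrix.fromBlocks ((1 : Matrix (Fin N₂) (Fin N₂) ℂ) + (ρ₁₂ : ℂ) • (H12 * H12ᴴ))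
    ((Real.sqrt ρ₁₂ : ℂ) • (H12 * Q)) ((Real.sqrt ρ₁₂ : ℂ) • (Qᴴ * H12ᴴ))
    (1 : Matrix (Fin M₂) (Fin M₂) ℂ)

/-- `I_{N₁} + ρ₁₁H₁₁H₁₁ᴴ` minus the Schur-complement correction with correlation `Q`. -/
noncomputable def detMat₂ {N₁ N₂ M₁ M₂ : ℕ} (ρ₁₁ ρ₁₂ : ℝ)
    (H11 : Matrix (Fin N₁) (Fin M₁) ℂ) (H12 : Matrix (Fin N₂) (Fin M₁) ℂ)
    (Q : Matrix (Fin M₁) (Fin M₂) ℂ) : Matrix (Fin N₁) (Fin N₁) ℂ :=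
  (1 : Matrix (Fin N₁) (Fin N₁) ℂ) + (ρ₁₁ : ℂ) • (H11 * H11ᴴ) -
    Matrix.fromCols ((Real.sqrt (ρ₁₁ * ρ₁₂) : ℂ) • (H11 * H12ᴴ))
        ((Real.sqrt ρ₁₁ : ℂ) • (H11 * Q)) *
      (innerBlock ρ₁₂ H12 Q)⁻¹ *
      Matrix.fromRows ((Real.sqrt (ρ₁₁ * ρ₁₂) : ℂ) • (H12 * H11ᴴ))
        ((Real.sqrt ρ₁₁ : ℂ) • (Qᴴ * H11ᴴ))

/-- `I_{N₂} + ρ₁₂ H₁₂H₁₂ᴴ`. -/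
noncomputable def detMat₃ {N₂ M₁ : ℕ} (ρ₁₂ : ℝ) (H12 : Matrix (Fin N₂) (Fin M₁) ℂ) :
    Matrix (Fin N₂) (Fin N₂) ℂ :=
  (1 : Matrix (Fin N₂) (Fin N₂) ℂ) + (ρ₁₂ : ℂ) • (H12 * H12ᴴ)

/-- `I_{N₁} + ρ₁₁H₁₁H₁₁ᴴ − ρ₁₁ρ₁₂ H₁₁H₁₂ᴴ (I + ρ₁₂H₁₂H₁₂ᴴ)⁻¹ H₁₂H₁₁ᴴ`. -/
noncomputable def detMat₄ {N₁ N₂ M₁ : ℕ} (ρ₁₁ ρ₁₂ : ℝ)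
    (H11 : Matrix (Fin N₁) (Fin M₁) ℂ) (H12 : Matrix (Fin N₂) (Fin M₁) ℂ) :
    Matrix (Fin N₁) (Fin N₁) ℂ :=
  (1 : Matrix (Fin N₁) (Fin N₁) ℂ) + (ρ₁₁ : ℂ) • (H11 * H11ᴴ) -
    ((ρ₁₁ * ρ₁₂ : ℝ) : ℂ) •
      (H11 * H12ᴴ * ((1 : Matrix (Fin N₂) (Fin N₂) ℂ) + (ρ₁₂ : ℂ) • (H12 * H12ᴴ))⁻¹ *
        (H12 * H11ᴴ))

namespace DetProdAux

open Matrix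

variable {m l : Type*} [Fintype m] [DecidableEq m] [Fintype l] [DecidableEq l]

lemma det_psd {A : Matrix m m ℂ} (hA : A.PosSemidef) :
    ∃ a : ℝ, 0 ≤ a ∧ A.det = (a : ℂ) := by
  refine ⟨∏ i, hA.1.eigenvalues i, Finset.prod_nonneg fun i _ => hA.eigenvalues_nonneg i, ?_⟩
  rw [hA.1.det_eq_prod_eigenvalues]; push_cast; rfl

lemma posDef_of_psd_det_ne_zero {A : Matrix m m ℂ} (hA : A.PosSemidef) (h : A.det ≠ 0) :
    A.PosDef := by
  rw [posDef_iff_dotProduct_mulVec]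
  refine ⟨hA.1, ?_⟩
  intro x hx
  refine lt_of_le_of_ne (hA.dotProduct_mulVec_nonneg x) (fun he => hx ?_)
  have h0 : A *ᵥ x = 0 := (hA.dotProduct_mulVec_zero_iff x).mp he.symm
  calc x = (A⁻¹ * A) *ᵥ x := by
        rw [Matrix.nonsing_inv_mul A (isUnit_iff_ne_zero.mpr h), one_mulVec]
  _ = A⁻¹ *ᵥ (A *ᵥ x) := by rw [mulVec_mulVec]
  _ = 0 := by rw [h0, mulVec_zero]

lemma eigenvalues_le_one {W : Matrix m m ℂ} (hW : W.PosSemidef)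
    (h1 : ((1 : Matrix m m ℂ) - W).PosSemidef) (i : m) :
    h1.1.eigenvalues i ≤ 1 := by
  set v := ⇑(h1.1.eigenvectorBasis i) with hv
  have he := h1.1.eigenvalues_eq i
  have hvv : star v ⬝ᵥ ((1 : Matrix m m ℂ) - W) *ᵥ v = star v ⬝ᵥ v - star v ⬝ᵥ W *ᵥ v := by
    rw [sub_mulVec, dotProduct_sub, one_mulVec]
  have hnorm : star v ⬝ᵥ v = (1 : ℂ) := by
    have h2 := (EuclideanSpace.inner_eq_star_dotProduct (h1.1.eigenvectorBasis i)
      (h1.1.eigenvectorBasis i)).symm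
    have h3 : (inner ℂ (h1.1.eigenvectorBasis i) (h1.1.eigenvectorBasis i) : ℂ) = 1 := by
      rw [inner_self_eq_norm_sq_to_K, h1.1.eigenvectorBasis.orthonormal.1 i]
      norm_num
    rw [← h3]
    rw [dotProduct_comm]
    exact h2
  rw [he, hvv, hnorm]
  rw [map_sub, RCLike.one_re]
  have := hW.re_dotProduct_nonneg v
  linarith

lemma det_one_sub_psd {W : Matrix m m ℂ} (hW : W.PosSemidef)
    (h1 : ((1 : Matrix m m ℂ) - W).PosSemidef) :
    ∃ c : ℝ, 0 ≤ c ∧ c ≤ 1 ∧ ((1 : Matrix m m ℂ) - W).det = (c : ℂ) := by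
  refine ⟨∏ i, h1.1.eigenvalues i, Finset.prod_nonneg fun i _ => h1.eigenvalues_nonneg i,
    ?_, ?_⟩
  · exact Finset.prod_le_one (fun i _ => h1.eigenvalues_nonneg i)
      (fun i _ => eigenvalues_le_one hW h1 i)
  · rw [h1.1.det_eq_prod_eigenvalues]; push_cast; rfl

open scoped MatrixOrder in
lemma det_sub_mul_conjTranspose_le {M' : Matrix m m ℂ} (hM' : M'.PosDef)
    {V : Matrix m l ℂ} (hP : (M' - V * Vᴴ).PosSemidef) :
    ∃ a b : ℝ, 0 ≤ a ∧ 0 ≤ b ∧ (M' - V * Vᴴ).det = (a : ℂ) ∧ M'.det = (b : ℂ) ∧ a ≤ b := by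
  obtain ⟨a, ha, hdetP⟩ := det_psd hP
  obtain ⟨b, hb, hdetM⟩ := det_psd hM'.posSemidef
  set S := CFC.sqrt M' with hSdef
  have hSS : S * S = M' := CFC.sqrt_mul_sqrt_self M' (nonneg_iff_posSemidef.mpr hM'.posSemidef)
  have hSpsd : S.PosSemidef := nonneg_iff_posSemidef.mp (CFC.sqrt_nonneg M')
  have hdS : S.det ≠ 0 := by
    intro h
    have h2 : M'.det = 0 := by rw [← hSS, det_mul, h, mul_zero]
    exact hM'.det_pos.ne' h2
  have hU : IsUnit S.det := isUnit_iff_ne_zero.mpr hdS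
  have hSinvH : S⁻¹ᴴ = S⁻¹ := by rw [Matrix.conjTranspose_nonsing_inv, hSpsd.1]
  set W := (S⁻¹ * V) * (S⁻¹ * V)ᴴ with hWdef
  have hWpsd : W.PosSemidef := posSemidef_self_mul_conjTranspose _
  have hkey : S⁻¹ * (M' - V * Vᴴ) * S⁻¹ = 1 - W := by
    rw [Matrix.mul_sub, Matrix.sub_mul]
    congr 1
    · rw [← hSS, ← Matrix.mul_assoc, Matrix.nonsing_inv_mul _ hU, Matrix.one_mul,
        Matrix.mul_nonsing_inv _ hU]
    · rw [hWdef, conjTranspose_mul, hSinvH]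
      simp only [Matrix.mul_assoc]
  have h1W : ((1 : Matrix m m ℂ) - W).PosSemidef := by
    have h2 := hP.mul_mul_conjTranspose_same S⁻¹
    rwa [hSinvH, hkey] at h2
  obtain ⟨c, hc0, hc1, hdc⟩ := det_one_sub_psd hWpsd h1W
  obtain ⟨s, hs, hdS2⟩ := det_psd hSpsd
  have hPeq : M' - V * Vᴴ = S * (1 - W) * S := by
    rw [← hkey, ← Matrix.mul_assoc, ← Matrix.mul_assoc, Matrix.mul_nonsing_inv _ hU,
      Matrix.one_mul, Matrix.mul_assoc, Matrix.nonsing_inv_mul _ hU, Matrix.mul_one]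
  have ha' : a = s * c * s := by
    have h4 : ((a : ℂ)) = ((s * c * s : ℝ) : ℂ) := by
      rw [← hdetP, hPeq, det_mul, det_mul, hdS2, hdc]; push_cast; ring
    exact_mod_cast h4
  have hb' : b = s * s := by
    have h4 : ((b : ℂ)) = ((s * s : ℝ) : ℂ) := by
      rw [← hdetM, ← hSS, det_mul, hdS2]; push_cast; ring
    exact_mod_cast h4
  exact ⟨a, b, ha, hb, hdetP, hdetM, by nlinarith⟩

lemma one_sub_conj_psd {Q : Matrix m l ℂ} (hQ : ((1 : Matrix m m ℂ) - Q * Qᴴ).PosSemidef) :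
    ((1 : Matrix l l ℂ) - Qᴴ * Q).PosSemidef := by
  haveI : Invertible (1 : Matrix m m ℂ) := invertibleOne
  haveI : Invertible (1 : Matrix l l ℂ) := invertibleOne
  have h1 : (fromBlocks (1 : Matrix m m ℂ) Q Qᴴ (1 : Matrix l l ℂ)).PosSemidef := by
    rw [PosDef.fromBlocks₂₂ _ _ Matrix.PosDef.one]
    simpa using hQ
  rw [PosDef.fromBlocks₁₁ _ _ Matrix.PosDef.one] at h1
  simpa using h1

omit [Fintype m] [DecidableEq m] [Fintype l] [DecidableEq l] in
lemma real_smul_conjTranspose (r : ℝ) (X : Matrix m l ℂ) :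
    ((r : ℂ) • X)ᴴ = (r : ℂ) • Xᴴ := by
  rw [conjTranspose_smul]
  simp [Complex.conj_ofReal]

end DetProdAux

open Matrix DetProdAux in
theorem det_product_correlated_le {N₁ N₂ M₁ M₂ : ℕ} (ρ₁₁ ρ₁₂ : ℝ)
    (hρ₁₁ : 0 ≤ ρ₁₁) (hρ₁₂ : 0 ≤ ρ₁₂)
    (H11 : Matrix (Fin N₁) (Fin M₁) ℂ) (H12 : Matrix (Fin N₂) (Fin M₁) ℂ)
    (Q : Matrix (Fin M₁) (Fin M₂) ℂ)
    (hQ : ((1 : Matrix (Fin M₁) (Fin M₁) ℂ) - Q * Qᴴ).PosSemidef) :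
    (detMat₁ ρ₁₂ H12 Q).PosSemidef ∧ (detMat₂ ρ₁₁ ρ₁₂ H11 H12 Q).PosSemidef ∧
    (detMat₃ ρ₁₂ H12).PosSemidef ∧ (detMat₄ ρ₁₁ ρ₁₂ H11 H12).PosSemidef ∧
    (innerBlock ρ₁₂ H12 Q).PosDef ∧ (detMat₃ ρ₁₂ H12).PosDef ∧
    ∃ a₁ a₂ b₁ b₂ : ℝ, 0 ≤ a₁ ∧ 0 ≤ a₂ ∧ 0 ≤ b₁ ∧ 0 ≤ b₂ ∧
      (detMat₁ ρ₁₂ H12 Q).det = (a₁ : ℂ) ∧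
      (detMat₂ ρ₁₁ ρ₁₂ H11 H12 Q).det = (a₂ : ℂ) ∧
      (detMat₃ ρ₁₂ H12).det = (b₁ : ℂ) ∧
      (detMat₄ ρ₁₁ ρ₁₂ H11 H12).det = (b₂ : ℂ) ∧
      a₁ * a₂ ≤ b₁ * b₂ := by
  -- scalar facts
  have hs12 : (Real.sqrt ρ₁₂ : ℂ) * (Real.sqrt ρ₁₂ : ℂ) = (ρ₁₂ : ℂ) := by
    rw [← Complex.ofReal_mul, Real.mul_self_sqrt hρ₁₂]
  have hs11 : (Real.sqrt ρ₁₁ : ℂ) * (Real.sqrt ρ₁₁ : ℂ) = (ρ₁₁ : ℂ) := by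
    rw [← Complex.ofReal_mul, Real.mul_self_sqrt hρ₁₁]
  have hsP : (Real.sqrt (ρ₁₁ * ρ₁₂) : ℂ) = (Real.sqrt ρ₁₁ : ℂ) * (Real.sqrt ρ₁₂ : ℂ) := by
    rw [Real.sqrt_mul hρ₁₁, Complex.ofReal_mul]
  have hsPP : (Real.sqrt (ρ₁₁ * ρ₁₂) : ℂ) * (Real.sqrt (ρ₁₁ * ρ₁₂) : ℂ) =
      ((ρ₁₁ * ρ₁₂ : ℝ) : ℂ) := by
    rw [← Complex.ofReal_mul, Real.mul_self_sqrt (mul_nonneg hρ₁₁ hρ₁₂)]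
  -- matrices
  set A : Matrix (Fin N₁) (Fin N₁) ℂ := 1 + (ρ₁₁ : ℂ) • (H11 * H11ᴴ) with hAdef
  set B1 : Matrix (Fin N₁) (Fin N₂) ℂ :=
    (Real.sqrt (ρ₁₁ * ρ₁₂) : ℂ) • (H11 * H12ᴴ) with hB1def
  set B : Matrix (Fin N₁) (Fin N₂ ⊕ Fin M₂) ℂ :=
    fromCols B1 ((Real.sqrt ρ₁₁ : ℂ) • (H11 * Q)) with hBdef
  set Dm : Matrix (Fin N₂ ⊕ Fin M₂) (Fin N₂ ⊕ Fin M₂) ℂ := innerBlock ρ₁₂ H12 Q with hDdef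
  set V : Matrix (Fin N₁ ⊕ Fin N₂) (Fin M₂) ℂ :=
    fromRows ((Real.sqrt ρ₁₁ : ℂ) • (H11 * Q)) ((Real.sqrt ρ₁₂ : ℂ) • (H12 * Q)) with hVdef
  set Z : Matrix (Fin N₂ ⊕ Fin M₂) (Fin M₁) ℂ :=
    fromRows ((Real.sqrt ρ₁₂ : ℂ) • H12) Qᴴ with hZdef
  set X1 : Matrix (Fin N₁) (Fin M₁) ℂ := (Real.sqrt ρ₁₁ : ℂ) • H11 with hX1def
  set Mbig : Matrix ((Fin N₁) ⊕ (Fin N₂ ⊕ Fin M₂)) ((Fin N₁) ⊕ (Fin N₂ ⊕ Fin M₂)) ℂ :=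
    fromBlocks A B Bᴴ Dm with hMdef
  set M2 : Matrix (Fin N₁ ⊕ Fin N₂) (Fin N₁ ⊕ Fin N₂) ℂ :=
    fromBlocks A B1 B1ᴴ (detMat₃ ρ₁₂ H12) with hM2def
  -- detMat₁ is positive definite
  have h1eq : detMat₁ ρ₁₂ H12 Q =
      1 + (((Real.sqrt ρ₁₂ : ℂ)) • H12) * ((1 : Matrix (Fin M₁) (Fin M₁) ℂ) - Q * Qᴴ) *
        (((Real.sqrt ρ₁₂ : ℂ)) • H12)ᴴ := by
    unfold detMat₁
    rw [real_smul_conjTranspose]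
    simp only [Matrix.mul_sub, Matrix.sub_mul, Matrix.mul_one, Matrix.smul_mul,
      Matrix.mul_smul, smul_smul, smul_sub, hs12, Matrix.mul_assoc, add_sub_assoc]
  have hPD1 : (detMat₁ ρ₁₂ H12 Q).PosDef := by
    rw [h1eq]
    exact Matrix.PosDef.one.add_posSemidef
      (hQ.mul_mul_conjTranspose_same (((Real.sqrt ρ₁₂ : ℂ)) • H12))
  -- detMat₃ is positive definite
  have h3eq : detMat₃ ρ₁₂ H12 =
      1 + (((Real.sqrt ρ₁₂ : ℂ)) • H12) * (((Real.sqrt ρ₁₂ : ℂ)) • H12)ᴴ := by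
    unfold detMat₃
    rw [real_smul_conjTranspose]
    simp only [Matrix.smul_mul, Matrix.mul_smul, smul_smul, hs12]
  have hPD3 : (detMat₃ ρ₁₂ H12).PosDef := by
    rw [h3eq]
    exact Matrix.PosDef.one.add_posSemidef (posSemidef_self_mul_conjTranspose _)
  have hQ' : ((1 : Matrix (Fin M₂) (Fin M₂) ℂ) - Qᴴ * Q).PosSemidef := one_sub_conj_psd hQ
  -- innerBlock decomposition
  have hZZ : Z * Zᴴ = fromBlocks ((ρ₁₂ : ℂ) • (H12 * H12ᴴ)) ((Real.sqrt ρ₁₂ : ℂ) • (H12 * Q))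
      ((Real.sqrt ρ₁₂ : ℂ) • (Qᴴ * H12ᴴ)) (Qᴴ * Q) := by
    rw [hZdef, conjTranspose_fromRows_eq_fromCols_conjTranspose, fromRows_mul_fromCols,
      real_smul_conjTranspose, conjTranspose_conjTranspose]
    simp only [Matrix.smul_mul, Matrix.mul_smul, smul_smul, hs12]
  have hDeq : Dm = fromBlocks (1 : Matrix (Fin N₂) (Fin N₂) ℂ) 0 0
      ((1 : Matrix (Fin M₂) (Fin M₂) ℂ) - Qᴴ * Q) + Z * Zᴴ := by
    rw [hZZ, hDdef]
    unfold innerBlock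
    rw [Matrix.fromBlocks_add]
    congr 1 <;> simp
  have hEpsd : (fromBlocks (1 : Matrix (Fin N₂) (Fin N₂) ℂ) 0 0
      ((1 : Matrix (Fin M₂) (Fin M₂) ℂ) - Qᴴ * Q)).PosSemidef := by
    haveI : Invertible (1 : Matrix (Fin N₂) (Fin N₂) ℂ) := invertibleOne
    have h0 : (0 : Matrix (Fin M₂) (Fin N₂) ℂ) = (0 : Matrix (Fin N₂) (Fin M₂) ℂ)ᴴ := by simp
    rw [h0, PosDef.fromBlocks₁₁ _ _ Matrix.PosDef.one]
    simpa using hQ'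
  have hDpsd : Dm.PosSemidef := by
    rw [hDeq]
    exact hEpsd.add (posSemidef_self_mul_conjTranspose _)
  have hdetD : Dm.det = (detMat₁ ρ₁₂ H12 Q).det := by
    rw [hDdef]
    unfold innerBlock detMat₁
    rw [det_fromBlocks_one₂₂]
    congr 1
    simp only [Matrix.smul_mul, Matrix.mul_smul, smul_smul, hs12, Matrix.mul_assoc,
      add_sub_assoc]
  have hDpd : Dm.PosDef := posDef_of_psd_det_ne_zero hDpsd (by rw [hdetD]; exact hPD1.det_pos.ne')
  haveI invD : Invertible Dm := hDpd.isUnit.invertible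
  -- Mbig decomposition
  have hX1Z : X1 * Zᴴ = B := by
    rw [hX1def, hZdef, hBdef, hB1def, hsP, conjTranspose_fromRows_eq_fromCols_conjTranspose,
      mul_fromCols, real_smul_conjTranspose, conjTranspose_conjTranspose]
    rw [mul_comm (Real.sqrt ρ₁₁ : ℂ) (Real.sqrt ρ₁₂ : ℂ)]
    simp only [Matrix.smul_mul, Matrix.mul_smul, smul_smul]
  have hMeq : Mbig = fromBlocks (1 : Matrix (Fin N₁) (Fin N₁) ℂ) 0 0
      (fromBlocks (1 : Matrix (Fin N₂) (Fin N₂) ℂ) 0 0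
        ((1 : Matrix (Fin M₂) (Fin M₂) ℂ) - Qᴴ * Q)) + (fromRows X1 Z) * (fromRows X1 Z)ᴴ := by
    rw [hMdef, conjTranspose_fromRows_eq_fromCols_conjTranspose, fromRows_mul_fromCols,
      Matrix.fromBlocks_add]
    refine Matrix.fromBlocks_inj.mpr ⟨?_, ?_, ?_, ?_⟩
    · rw [hAdef, hX1def, real_smul_conjTranspose]
      simp only [Matrix.smul_mul, Matrix.mul_smul, smul_smul, hs11]
    · rw [zero_add, hX1Z]
    · rw [zero_add, ← hX1Z, conjTranspose_mul, conjTranspose_conjTranspose]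
    · exact hDeq
  have hMpsd : Mbig.PosSemidef := by
    rw [hMeq]
    refine Matrix.PosSemidef.add ?_ (posSemidef_self_mul_conjTranspose _)
    haveI : Invertible (1 : Matrix (Fin N₁) (Fin N₁) ℂ) := invertibleOne
    have h0 : (0 : Matrix (Fin N₂ ⊕ Fin M₂) (Fin N₁) ℂ) =
        (0 : Matrix (Fin N₁) (Fin N₂ ⊕ Fin M₂) ℂ)ᴴ := by simp
    rw [h0, PosDef.fromBlocks₁₁ _ _ Matrix.PosDef.one]
    simpa using hEpsd
  -- detMat₂
  have hBH : Bᴴ = fromRows ((Real.sqrt (ρ₁₁ * ρ₁₂) : ℂ) • (H12 * H11ᴴ))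
      ((Real.sqrt ρ₁₁ : ℂ) • (Qᴴ * H11ᴴ)) := by
    rw [hBdef, hB1def, conjTranspose_fromCols_eq_fromRows_conjTranspose,
      real_smul_conjTranspose, real_smul_conjTranspose, conjTranspose_mul,
      conjTranspose_mul, conjTranspose_conjTranspose]
  have hSchur2 : detMat₂ ρ₁₁ ρ₁₂ H11 H12 Q = A - B * Dm⁻¹ * Bᴴ := by
    unfold detMat₂
    rw [hBH, hAdef, hBdef, hB1def, hDdef]
  have hPSD2 : (detMat₂ ρ₁₁ ρ₁₂ H11 H12 Q).PosSemidef := by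
    rw [hSchur2]
    exact (PosDef.fromBlocks₂₂ A B hDpd).mp hMpsd
  have hdetMbig : Mbig.det = (detMat₁ ρ₁₂ H12 Q).det * (detMat₂ ρ₁₁ ρ₁₂ H11 H12 Q).det := by
    rw [hMdef, det_fromBlocks₂₂, invOf_eq_nonsing_inv, ← hSchur2, hdetD]
  -- M2 decomposition
  have hB1H : B1ᴴ = (Real.sqrt (ρ₁₁ * ρ₁₂) : ℂ) • (H12 * H11ᴴ) := by
    rw [hB1def, real_smul_conjTranspose, conjTranspose_mul, conjTranspose_conjTranspose]
  have hblock2 : B1 = X1 * ((Real.sqrt ρ₁₂ : ℂ) • H12)ᴴ := by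
    rw [hB1def, hX1def, hsP, real_smul_conjTranspose,
      mul_comm (Real.sqrt ρ₁₁ : ℂ) (Real.sqrt ρ₁₂ : ℂ)]
    simp only [Matrix.smul_mul, Matrix.mul_smul, smul_smul]
  have hM2eq : M2 = 1 + (fromRows X1 ((Real.sqrt ρ₁₂ : ℂ) • H12)) *
      (fromRows X1 ((Real.sqrt ρ₁₂ : ℂ) • H12))ᴴ := by
    rw [hM2def, conjTranspose_fromRows_eq_fromCols_conjTranspose, fromRows_mul_fromCols,
      ← Matrix.fromBlocks_one, Matrix.fromBlocks_add]
    refine Matrix.fromBlocks_inj.mpr ⟨?_, ?_, ?_, ?_⟩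
    · rw [hAdef, hX1def, real_smul_conjTranspose]
      simp only [Matrix.smul_mul, Matrix.mul_smul, smul_smul, hs11]
    · rw [zero_add, hblock2]
    · rw [zero_add, hblock2, conjTranspose_mul, conjTranspose_conjTranspose]
    · exact h3eq
  have hM2pd : M2.PosDef := by
    rw [hM2eq]
    exact Matrix.PosDef.one.add_posSemidef (posSemidef_self_mul_conjTranspose _)
  haveI inv3 : Invertible (detMat₃ ρ₁₂ H12) := hPD3.isUnit.invertible
  -- detMat₄
  have hSchur4 : detMat₄ ρ₁₁ ρ₁₂ H11 H12 = A - B1 * (detMat₃ ρ₁₂ H12)⁻¹ * B1ᴴ := by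
    unfold detMat₄
    rw [hB1H, hB1def, hAdef]
    congr 1
    show ((ρ₁₁ * ρ₁₂ : ℝ) : ℂ) • (H11 * H12ᴴ * (detMat₃ ρ₁₂ H12)⁻¹ * (H12 * H11ᴴ)) = _
    simp only [Matrix.smul_mul, Matrix.mul_smul, smul_smul, hsPP]
  have hPSD4 : (detMat₄ ρ₁₁ ρ₁₂ H11 H12).PosSemidef := by
    rw [hSchur4]
    exact (PosDef.fromBlocks₂₂ A B1 hPD3).mp (hM2def ▸ hM2pd.posSemidef)
  have hdetM2 : M2.det = (detMat₃ ρ₁₂ H12).det * (detMat₄ ρ₁₁ ρ₁₂ H11 H12).det := by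
    rw [hM2def, det_fromBlocks₂₂, invOf_eq_nonsing_inv, ← hSchur4]
  -- reindexing
  set e : (Fin N₁ ⊕ Fin N₂) ⊕ Fin M₂ ≃ Fin N₁ ⊕ (Fin N₂ ⊕ Fin M₂) :=
    Equiv.sumAssoc (Fin N₁) (Fin N₂) (Fin M₂) with hedef
  have hre : Mbig.submatrix e e = fromBlocks M2 V Vᴴ 1 := by
    ext i j
    rcases i with (i | i) | i <;> rcases j with (j | j) | j <;>
      simp [hedef, hMdef, hM2def, hBdef, hB1def, hVdef, hAdef, hDdef, innerBlock, detMat₃,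
        Matrix.submatrix_apply, Equiv.sumAssoc_apply_inl_inl, Equiv.sumAssoc_apply_inl_inr,
        Equiv.sumAssoc_apply_inr, Matrix.fromBlocks_apply₁₁, Matrix.fromBlocks_apply₁₂,
        Matrix.fromBlocks_apply₂₁, Matrix.fromBlocks_apply₂₂, Matrix.fromCols_apply_inl,
        Matrix.fromCols_apply_inr, Matrix.fromRows_apply_inl, Matrix.fromRows_apply_inr,
        Matrix.conjTranspose_apply, Matrix.smul_apply, Matrix.mul_apply, star_mul',
        Complex.conj_ofReal, Finset.mul_sum, mul_comm, mul_left_comm, mul_assoc]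
  have hchain : Mbig.det = (M2 - V * Vᴴ).det := by
    rw [← det_submatrix_equiv_self e Mbig, hre, det_fromBlocks_one₂₂]
  have hMre_psd : (fromBlocks M2 V Vᴴ (1 : Matrix (Fin M₂) (Fin M₂) ℂ)).PosSemidef := by
    rw [← hre]
    exact (posSemidef_submatrix_equiv e).mpr hMpsd
  have hP : (M2 - V * Vᴴ).PosSemidef := by
    haveI : Invertible (1 : Matrix (Fin M₂) (Fin M₂) ℂ) := invertibleOne
    have h2 := (PosDef.fromBlocks₂₂ M2 V Matrix.PosDef.one).mp hMre_psd
    simpa using h2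
  obtain ⟨a, b, ha, hb, hdeta, hdetb, hab⟩ := det_sub_mul_conjTranspose_le hM2pd hP
  -- assemble
  obtain ⟨a₁, ha₁, hda₁⟩ := det_psd hPD1.posSemidef
  obtain ⟨a₂, ha₂, hda₂⟩ := det_psd hPSD2
  obtain ⟨b₁, hb₁, hdb₁⟩ := det_psd hPD3.posSemidef
  obtain ⟨b₂, hb₂, hdb₂⟩ := det_psd hPSD4
  have key1 : a₁ * a₂ = a := by
    have h4 : ((a₁ * a₂ : ℝ) : ℂ) = ((a : ℝ) : ℂ) := by
      push_cast
      rw [← hda₁, ← hda₂, ← hdetMbig, hchain, hdeta]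
    exact_mod_cast h4
  have key2 : b₁ * b₂ = b := by
    have h4 : ((b₁ * b₂ : ℝ) : ℂ) = ((b : ℝ) : ℂ) := by
      push_cast
      rw [← hdb₁, ← hdb₂, ← hdetM2, hdetb]
    exact_mod_cast h4
  exact ⟨hPD1.posSemidef, hPSD2, hPD3.posSemidef, hPSD4, hDdef ▸ hDpd, hPD3,
    a₁, a₂, b₁, b₂, ha₁, ha₂, hb₁, hb₂, hda₁, hda₂, hdb₁, hdb₂, by rw [key1, key2]; exact hab⟩
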